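/- Let J be a finite set, φ : 2^J → ℝ submodular, and X ⊆ Y ⊆ J such that φ is modular on every pair A, B with X ⊆ A, B ⊆ Y. Then for every T with X ⊆ T ⊆ Y, φ(T) = φ(X) + Σ_{t ∈ T \ X} (φ(X + t) − φ(X)). -/

import Mathlib

/-- If `φ` is submodular on a finite set and modular on every pair between `X`
and `Y`, then `φ(T) = φ(X) + Σ_{t ∈ T \ X} (φ(X + t) − φ(X))` for `X ⊆ T ⊆ Y`. -/
theorem stmt13 {J : Type*} [DecidableEq J] [Fintype J] (φ : Finset J → ℝ)
    (hsub : ∀ A B : Finset J, φ (A ∩ B) + φ (A ∪ B) ≤ φ A + φ B)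
    (X Y : Finset J) (hXY : X ⊆ Y)
    (hmod : ∀ A B : Finset J, X ⊆ A → A ⊆ Y → X ⊆ B → B ⊆ Y →
      φ A + φ B = φ (A ∩ B) + φ (A ∪ B)) :
    ∀ T : Finset J, X ⊆ T → T ⊆ Y →
      φ T = φ X + ∑ t ∈ T \ X, (φ (insert t X) - φ X) := by
  intro T
  induction T using Finset.strongInduction with
  | _ T ih =>
    intro hXT hTY
    rcases eq_or_ne T X with rfl | hne
    · simp
    · obtain ⟨t, ht⟩ : (T \ X).Nonempty := by
        rw [Finset.sdiff_nonempty]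
        intro h
        exact hne (Finset.Subset.antisymm h hXT)
      have htT : t ∈ T := (Finset.mem_sdiff.mp ht).1
      have htX : t ∉ X := (Finset.mem_sdiff.mp ht).2
      set T' := T.erase t with hT'
      have hT'ss : T' ⊂ T := Finset.erase_ssubset htT
      have hXT' : X ⊆ T' := fun x hx =>
        Finset.mem_erase.mpr ⟨fun h => htX (h ▸ hx), hXT hx⟩
      have hT'Y : T' ⊆ Y := (Finset.erase_subset _ _).trans hTY
      have hcap : T' ∩ insert t X = X := by
        apply Finset.Subset.antisymm
        · intro x hx
          rcases Finset.mem_inter.mp hx with ⟨hx1, hx2⟩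
          rcases Finset.mem_insert.mp hx2 with rfl | hx3
          · exact absurd (Finset.mem_erase.mp hx1).1 (by simp)
          · exact hx3
        · exact Finset.subset_inter hXT' (Finset.subset_insert _ _)
      have hcup : T' ∪ insert t X = T := by
        apply Finset.Subset.antisymm
        · exact Finset.union_subset (Finset.erase_subset _ _)
            (Finset.insert_subset htT hXT)
        · intro x hx
          by_cases hxt : x = t
          · exact Finset.mem_union_right _ (Finset.mem_insert.mpr (Or.inl hxt))
          · exact Finset.mem_union_left _ (Finset.mem_erase.mpr ⟨hxt, hx⟩)
      have hmod' := hmod T' (insert t X) hXT' hT'Y (Finset.subset_insert _ _)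
        (Finset.insert_subset (hTY htT) hXY)
      rw [hcap, hcup] at hmod'
      have hsum : T \ X = insert t (T' \ X) := by
        rw [hT', Finset.erase_sdiff_comm, Finset.insert_erase ht]
      have hind := ih T' hT'ss hXT' hT'Y
      rw [hsum, Finset.sum_insert (by simp [hT'])]
      rw [hind] at hmod'
      linarith
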